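/- arXiv:2003.05219 — 4 statements merged into one kernel-verified Lean document; each statement's English description precedes it below -/
import Mathlib

section
/- Let Φ : ℂⁿ → B(H) be Borel with H separable, λ ∈ ℂⁿ, g ∈ H, and suppose the function w ↦ Φ(w)k_λ(w)g lies in L²(μ_G;H). Then for every z ∈ ℂⁿ, the orthogonal projection P of L²(μ_G;H) onto the vector-valued Segal–Bargmann space B⊗H satisfies (P(Φ·(k_λ⊗g)))(z) = k_λ(z) · (P(Φ_λ ⊗ g))(z - λ), where Φ_λ(u) = Φ(u+λ) and (Φ_λ⊗g)(u) = Φ(u+λ)g. -/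
open MeasureTheory Complex ENNReal Filter

noncomputable section

/-- `ℂⁿ` with the standard Hermitian structure. -/
abbrev Cn (n : ℕ) := EuclideanSpace ℂ (Fin n)

instance (n : ℕ) : MeasurableSpace (Cn n) := borel _
instance (n : ℕ) : BorelSpace (Cn n) := ⟨rfl⟩

/-- The Gaussian measure `dμ_G(z) = π^{-n} exp(-|z|²) dV(z)` on `ℂⁿ`. -/
def gaussian (n : ℕ) : Measure (Cn n) :=
  volume.withDensity fun z =>
    ENNReal.ofReal ((Real.pi ^ n)⁻¹ * Real.exp (-‖z‖ ^ 2))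

/-- The reproducing kernel function `k_λ(z) = exp(⟨z,λ⟩)`, where `⟨z,λ⟩ = Σ z_i conj(λ_i)`
(which in Mathlib's convention is `⟪λ, z⟫`). -/
def kern {n : ℕ} (lam z : Cn n) : ℂ := Complex.exp ((inner ℂ lam z : ℂ))

variable {H : Type} [NormedAddCommGroup H] [InnerProductSpace ℂ H] [CompleteSpace H]

/-- The vector-valued Segal–Bargmann space `B ⊗ H`, viewed as the set of elements of
`L²(μ_G; H)` admitting an analytic representative. -/
def SegalBargmann (n : ℕ) (H : Type) [NormedAddCommGroup H] [InnerProductSpace ℂ H] :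
    Set (Lp H 2 (gaussian n)) :=
  {F | ∃ f : Cn n → H, AnalyticOn ℂ f Set.univ ∧ ∀ᵐ z ∂(gaussian n), F z = f z}

/-- the density of the gaussian measure -/
def gdens (n : ℕ) (z : Cn n) : ℝ := (Real.pi ^ n)⁻¹ * Real.exp (-‖z‖ ^ 2)

lemma gdens_pos {n : ℕ} (z : Cn n) : 0 < gdens n z :=
  mul_pos (inv_pos.2 (pow_pos Real.pi_pos n)) (Real.exp_pos _)

/-- the weight appearing after translating the gaussian measure -/
def wt {n : ℕ} (lam u : Cn n) : ℝ :=
  Real.exp (-(2 * ((inner ℂ lam u : ℂ)).re) - ‖lam‖ ^ 2)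

lemma wt_pos {n : ℕ} (lam u : Cn n) : 0 < wt lam u := Real.exp_pos _

lemma gdens_translate {n : ℕ} (lam u : Cn n) :
    gdens n (u + lam) = gdens n u * wt lam u := by
  unfold gdens wt
  rw [mul_assoc, ← Real.exp_add]
  congr 1
  have h : ‖u + lam‖ ^ 2 = ‖u‖ ^ 2 + 2 * ((inner ℂ u lam : ℂ)).re + ‖lam‖ ^ 2 := by
    have := @norm_add_sq ℂ _ _ _ _ u lam
    simpa using this
  have hre : ((inner ℂ u lam : ℂ)).re = ((inner ℂ lam u : ℂ)).re := by
    rw [← inner_conj_symm lam u, Complex.conj_re]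
  rw [h, hre]; ring

lemma wt_continuous {n : ℕ} (lam : Cn n) : Continuous (wt lam) := by
  unfold wt
  have h1 : Continuous fun u : Cn n => (inner ℂ lam u : ℂ) := (innerSL ℂ lam).continuous
  exact Real.continuous_exp.comp
    (((continuous_const.mul (Complex.continuous_re.comp h1)).neg).sub continuous_const)

lemma gdens_measurable (n : ℕ) : Measurable (fun z => ENNReal.ofReal (gdens n z)) := by
  unfold gdens; fun_prop

lemma map_sub_gaussian {n : ℕ} (lam : Cn n) :
    (gaussian n).map (fun w => w - lam) =
      (gaussian n).withDensity (fun u => ENNReal.ofReal (wt lam u)) := by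
  have hρ : Measurable (fun z => ENNReal.ofReal (gdens n z)) := gdens_measurable n
  have hwt : Measurable (fun u => ENNReal.ofReal (wt lam u)) :=
    (wt_continuous lam).measurable.ennreal_ofReal
  have hT : Measurable (fun w : Cn n => w - lam) := measurable_id.sub_const lam
  have hgauss : gaussian n = volume.withDensity (fun z => ENNReal.ofReal (gdens n z)) := rfl
  ext s hs
  rw [Measure.map_apply hT hs, hgauss, withDensity_apply _ (hT hs),
    withDensity_apply _ hs]
  have hS : MeasurePreserving (fun u : Cn n => u + lam) volume volume :=
    measurePreserving_add_right volume lam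
  have hemb : MeasurableEmbedding (fun u : Cn n => u + lam) :=
    (MeasurableEquiv.addRight lam).measurableEmbedding
  have hpre : (fun u : Cn n => u + lam) ⁻¹' ((fun w : Cn n => w - lam) ⁻¹' s) = s := by
    ext u; simp
  have hchg := hS.setLIntegral_comp_preimage_emb hemb
    (fun w => ENNReal.ofReal (gdens n w)) ((fun w : Cn n => w - lam) ⁻¹' s)
  rw [hpre] at hchg
  calc ∫⁻ w in (fun w : Cn n => w - lam) ⁻¹' s, ENNReal.ofReal (gdens n w) ∂volume
      = ∫⁻ u in s, ENNReal.ofReal (gdens n (u + lam)) ∂volume := hchg.symm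
    _ = ∫⁻ u in s, ENNReal.ofReal (gdens n u) * ENNReal.ofReal (wt lam u) ∂volume := by
        congr 1; ext u
        rw [gdens_translate, ENNReal.ofReal_mul (le_of_lt (gdens_pos u))]
    _ = ∫⁻ u in s, ENNReal.ofReal (wt lam u) ∂(volume.withDensity (fun z => ENNReal.ofReal (gdens n z))) := by
        rw [setLIntegral_withDensity_eq_setLIntegral_mul _ hρ hwt hs]
        simp only [Pi.mul_apply]

lemma wt_toNNReal_measurable {n : ℕ} (lam : Cn n) :
    Measurable (fun u : Cn n => (wt lam u).toNNReal) :=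
  (wt_continuous lam).measurable.real_toNNReal

lemma integral_gaussian_translate {n : ℕ} {E : Type*} [NormedAddCommGroup E]
    [NormedSpace ℝ E] (lam : Cn n) (f : Cn n → E)
    (hf : AEStronglyMeasurable f (gaussian n)) :
    ∫ w, f (w - lam) ∂(gaussian n) = ∫ u, wt lam u • f u ∂(gaussian n) := by
  have hT : AEMeasurable (fun w : Cn n => w - lam) (gaussian n) :=
    (measurable_id.sub_const lam).aemeasurable
  have hf' : AEStronglyMeasurable f ((gaussian n).map (fun w => w - lam)) := by
    rw [map_sub_gaussian]
    exact hf.mono_ac (withDensity_absolutelyContinuous _ _)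
  rw [← integral_map hT hf', map_sub_gaussian]
  have : (fun u : Cn n => ENNReal.ofReal (wt lam u))
      = fun u => ((wt lam u).toNNReal : ℝ≥0∞) := by
    ext u; rw [ENNReal.ofReal]
  rw [this, integral_withDensity_eq_integral_smul (wt_toNNReal_measurable lam)]
  congr 1; ext u
  rw [NNReal.smul_def, Real.coe_toNNReal _ (wt_pos lam u).le]

lemma integrable_gaussian_translate {n : ℕ} {E : Type*} [NormedAddCommGroup E]
    [NormedSpace ℝ E] (lam : Cn n) (f : Cn n → E)
    (hf : AEStronglyMeasurable f (gaussian n)) :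
    Integrable (fun w => f (w - lam)) (gaussian n) ↔
      Integrable (fun u => wt lam u • f u) (gaussian n) := by
  have hT : AEMeasurable (fun w : Cn n => w - lam) (gaussian n) :=
    (measurable_id.sub_const lam).aemeasurable
  have hf' : AEStronglyMeasurable f ((gaussian n).map (fun w => w - lam)) := by
    rw [map_sub_gaussian]
    exact hf.mono_ac (withDensity_absolutelyContinuous _ _)
  have h1 : Integrable (fun w => f (w - lam)) (gaussian n)
      ↔ Integrable f ((gaussian n).map (fun w => w - lam)) :=
    (integrable_map_measure hf' hT).symm
  rw [h1, map_sub_gaussian]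
  have h2 : (fun u : Cn n => ENNReal.ofReal (wt lam u))
      = fun u => ((wt lam u).toNNReal : ℝ≥0∞) := by
    ext u; rw [ENNReal.ofReal]
  rw [h2, integrable_withDensity_iff_integrable_smul (wt_toNNReal_measurable lam)]
  have h3 : (fun u : Cn n => (wt lam u).toNNReal • f u) = fun u => wt lam u • f u := by
    ext u; rw [NNReal.smul_def, Real.coe_toNNReal _ (wt_pos lam u).le]
  rw [h3]

lemma exp_sq (a : ℝ) : (Real.exp a) ^ 2 = Real.exp (2 * a) := by
  rw [sq, ← Real.exp_add, two_mul]

lemma kern_continuous {n : ℕ} (lam : Cn n) : Continuous (kern lam) :=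
  Complex.continuous_exp.comp (innerSL ℂ lam).continuous

lemma kern_analyticOnNhd {n : ℕ} (lam : Cn n) : AnalyticOnNhd ℂ (kern lam) Set.univ := by
  have h : AnalyticOnNhd ℂ (fun z : Cn n => (inner ℂ lam z : ℂ)) Set.univ :=
    (innerSL ℂ lam).analyticOnNhd _
  exact h.cexp

lemma norm_kern {n : ℕ} (lam z : Cn n) :
    ‖kern lam z‖ = Real.exp ((inner ℂ lam z : ℂ)).re := by
  rw [kern, Complex.norm_exp]

lemma key_scalar {n : ℕ} (lam u : Cn n) :
    (wt lam u : ℂ) * (starRingEnd ℂ) (kern lam (u + lam)) =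
      Complex.exp (-(inner ℂ lam u : ℂ)) := by
  set z : ℂ := (inner ℂ lam u : ℂ) with hz
  have h1 : kern lam (u + lam) = Complex.exp (z + (‖lam‖ : ℂ) ^ 2) := by
    rw [kern, inner_add_right, inner_self_eq_norm_sq_to_K, ← hz]; norm_num
  rw [h1, ← Complex.exp_conj]
  have h2 : (wt lam u : ℂ) = Complex.exp ((-(2 * z.re) - ‖lam‖ ^ 2 : ℝ) : ℂ) := by
    rw [wt, Complex.ofReal_exp]
  rw [h2, ← Complex.exp_add]
  congr 1
  have h3 : (starRingEnd ℂ) z = ((2 * z.re : ℝ) : ℂ) - z := by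
    rw [← Complex.add_conj]; ring
  rw [map_add, h3]
  have h4 : (starRingEnd ℂ) ((‖lam‖ : ℂ) ^ 2) = (‖lam‖ : ℂ) ^ 2 := by
    rw [map_pow, Complex.conj_ofReal]
  rw [h4]
  push_cast
  ring


lemma SegalBargmann.sub {n : ℕ} {F G : Lp H 2 (gaussian n)}
    (hF : F ∈ SegalBargmann n H) (hG : G ∈ SegalBargmann n H) :
    F - G ∈ SegalBargmann n H := by
  obtain ⟨f, hfa, hfe⟩ := hF
  obtain ⟨g, hga, hge⟩ := hG
  refine ⟨f - g, ?_, ?_⟩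
  · rw [analyticOn_univ] at hfa hga ⊢
    exact hfa.sub hga
  · filter_upwards [Lp.coeFn_sub F G, hfe, hge] with z h1 h2 h3
    rw [h1, Pi.sub_apply, h2, h3, Pi.sub_apply]


set_option maxHeartbeats 1000000 in
/-- if `P` is the orthogonal projection of `L²(μ_G;H)` onto the Segal–Bargmann
space `B ⊗ H`, then `(P(Φ·(k_λ⊗g)))(z) = k_λ(z) · (P(Φ_λ ⊗ g))(z − λ)` for all `z`,
where `Φ_λ(u) = Φ(u+λ)`; the two sides are compared through analytic representatives. -/
theorem toeplitz_translation_formula {n : ℕ}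
    (P : Lp H 2 (gaussian n) →L[ℂ] Lp H 2 (gaussian n))
    (hP_range : ∀ F, P F ∈ SegalBargmann n H)
    (hP_orth : ∀ F, ∀ G ∈ SegalBargmann n H, (inner ℂ (F - P F) G : ℂ) = 0)
    (Φ : Cn n → H →L[ℂ] H) (lam : Cn n) (g : H)
    (F₁ F₂ : Lp H 2 (gaussian n))
    (hF₁ : ∀ᵐ w ∂(gaussian n), F₁ w = kern lam w • Φ w g)
    (hF₂ : ∀ᵐ w ∂(gaussian n), F₂ w = Φ (w + lam) g)
    (p₁ p₂ : Cn n → H)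
    (hp₁a : AnalyticOn ℂ p₁ Set.univ) (hp₁ : ∀ᵐ z ∂(gaussian n), (P F₁) z = p₁ z)
    (hp₂a : AnalyticOn ℂ p₂ Set.univ) (hp₂ : ∀ᵐ z ∂(gaussian n), (P F₂) z = p₂ z) :
    ∀ z : Cn n, p₁ z = kern lam z • p₂ (z - lam) := by
  have hp₂nhd : AnalyticOnNhd ℂ p₂ Set.univ := analyticOn_univ.mp hp₂a
  have hp₁nhd : AnalyticOnNhd ℂ p₁ Set.univ := analyticOn_univ.mp hp₁a
  have hp₂c : Continuous p₂ := by exact continuousOn_univ.mp hp₂nhd.continuousOn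
  have hp₁c : Continuous p₁ := by exact continuousOn_univ.mp hp₁nhd.continuousOn
  have htrans : Continuous (fun u : Cn n => u + lam) := continuous_id.add continuous_const
  have htrans' : Continuous (fun u : Cn n => u - lam) := continuous_id.sub continuous_const
  -- the candidate function q
  set q : Cn n → H := fun z => kern lam z • p₂ (z - lam) with hqdef
  have hqa : AnalyticOnNhd ℂ q Set.univ := by
    apply (kern_analyticOnNhd lam).smul
    exact hp₂nhd.comp (analyticOnNhd_id.sub analyticOnNhd_const) (Set.mapsTo_univ _ _)
  have hqc : Continuous q := (kern_continuous lam).smul (hp₂c.comp htrans')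
  -- q is in L²
  have hp₂mem : MemLp p₂ 2 (gaussian n) := (Lp.memLp (P F₂)).ae_eq hp₂
  have hp₂sq : Integrable (fun u => ‖p₂ u‖ ^ 2) (gaussian n) :=
    (memLp_two_iff_integrable_sq_norm hp₂c.aestronglyMeasurable).mp hp₂mem
  have hqsq : Integrable (fun w => ‖q w‖ ^ 2) (gaussian n) := by
    have hfm : AEStronglyMeasurable
        (fun u : Cn n => Real.exp (2 * ((inner ℂ lam (u + lam) : ℂ)).re) * ‖p₂ u‖ ^ 2) (gaussian n) := by
      refine Continuous.aestronglyMeasurable ?_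
      have : Continuous fun u : Cn n => (inner ℂ lam (u + lam) : ℂ) :=
        (innerSL ℂ lam).continuous.comp htrans
      exact (Real.continuous_exp.comp
        (continuous_const.mul (Complex.continuous_re.comp this))).mul ((hp₂c.norm).pow 2)
    have hiff := integrable_gaussian_translate lam _ hfm
    have hrhs : Integrable
        (fun u : Cn n => wt lam u •
          (Real.exp (2 * ((inner ℂ lam (u + lam) : ℂ)).re) * ‖p₂ u‖ ^ 2)) (gaussian n) := by
      have heq : (fun u : Cn n => wt lam u •
            (Real.exp (2 * ((inner ℂ lam (u + lam) : ℂ)).re) * ‖p₂ u‖ ^ 2))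
          = fun u => Real.exp (‖lam‖ ^ 2) * ‖p₂ u‖ ^ 2 := by
        funext u
        rw [smul_eq_mul, wt, ← mul_assoc, ← Real.exp_add]
        congr 2
        rw [inner_add_right, inner_self_eq_norm_sq_to_K]
        simp [← Complex.ofReal_pow]
        ring
      rw [heq]
      exact hp₂sq.const_mul _
    have hlhs := hiff.mpr hrhs
    apply hlhs.congr
    filter_upwards with w
    rw [hqdef]
    simp only [sub_add_cancel]
    rw [norm_smul, mul_pow, norm_kern, exp_sq]
  have hqmem : MemLp q 2 (gaussian n) :=
    (memLp_two_iff_integrable_sq_norm hqc.aestronglyMeasurable).mpr hqsq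
  set qL : Lp H 2 (gaussian n) := hqmem.toLp q with hqLdef
  have hqLe : ∀ᵐ w ∂(gaussian n), qL w = q w := hqmem.coeFn_toLp
  have hqLSB : qL ∈ SegalBargmann n H := ⟨q, analyticOn_univ.mpr hqa, hqLe⟩
  -- key orthogonality: F₁ - qL ⟂ SegalBargmann
  have hkey : ∀ G ∈ SegalBargmann n H, (inner ℂ (F₁ - qL) G : ℂ) = 0 := by
    intro G0 hG0
    obtain ⟨hG, hGa0, hGe⟩ := hG0
    have hGa : AnalyticOnNhd ℂ hG Set.univ := analyticOn_univ.mp hGa0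
    have hGc : Continuous hG := by exact continuousOn_univ.mp hGa.continuousOn
    set Gt : Cn n → H := fun u => Complex.exp (-(inner ℂ lam u : ℂ)) • hG (u + lam) with hGtdef
    have hinnc : Continuous fun u : Cn n => (inner ℂ lam u : ℂ) := (innerSL ℂ lam).continuous
    have hGtc : Continuous Gt :=
      (Complex.continuous_exp.comp hinnc.neg).smul (hGc.comp htrans)
    have hGta : AnalyticOnNhd ℂ Gt Set.univ := by
      apply AnalyticOnNhd.smul
      · exact (((innerSL ℂ lam).analyticOnNhd _).neg).cexp
      · exact hGa.comp (analyticOnNhd_id.add analyticOnNhd_const) (Set.mapsTo_univ _ _)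
    have hGmem : MemLp hG 2 (gaussian n) := (Lp.memLp G0).ae_eq hGe
    have hGsq : Integrable (fun w => ‖hG w‖ ^ 2) (gaussian n) :=
      (memLp_two_iff_integrable_sq_norm hGc.aestronglyMeasurable).mp hGmem
    have hGtsq : Integrable (fun u => ‖Gt u‖ ^ 2) (gaussian n) := by
      have hfm : AEStronglyMeasurable
          (fun u : Cn n => Real.exp (‖lam‖ ^ 2) * ‖hG (u + lam)‖ ^ 2) (gaussian n) :=
        (continuous_const.mul (((hGc.comp htrans).norm).pow 2)).aestronglyMeasurable
      have hiff := integrable_gaussian_translate lam _ hfm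
      have hlhs : Integrable
          (fun w : Cn n => Real.exp (‖lam‖ ^ 2) * ‖hG (w - lam + lam)‖ ^ 2) (gaussian n) := by
        have := hGsq.const_mul (Real.exp (‖lam‖ ^ 2))
        apply this.congr
        filter_upwards with w
        rw [sub_add_cancel]
      have hrhs := hiff.mp hlhs
      apply hrhs.congr
      filter_upwards with u
      rw [smul_eq_mul, hGtdef]
      simp only
      rw [norm_smul, mul_pow, Complex.norm_exp, exp_sq, wt,
        ← mul_assoc, ← Real.exp_add]
      congr 2
      simp [← Complex.ofReal_pow]
    have hGtmem : MemLp Gt 2 (gaussian n) :=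
      (memLp_two_iff_integrable_sq_norm hGtc.aestronglyMeasurable).mpr hGtsq
    set GtL : Lp H 2 (gaussian n) := hGtmem.toLp Gt with hGtLdef
    have hGtLe : ∀ᵐ u ∂(gaussian n), GtL u = Gt u := hGtmem.coeFn_toLp
    have hGtSB : GtL ∈ SegalBargmann n H := ⟨Gt, analyticOn_univ.mpr hGta, hGtLe⟩
    -- measurable pieces
    have hφ : AEStronglyMeasurable (fun u : Cn n => Φ (u + lam) g) (gaussian n) :=
      (Lp.aestronglyMeasurable F₂).congr hF₂
    set D : Cn n → H := fun u => Φ (u + lam) g - p₂ u with hDdef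
    have hD : AEStronglyMeasurable D (gaussian n) := hφ.sub hp₂c.aestronglyMeasurable
    set f : Cn n → ℂ := fun u => (inner ℂ (kern lam (u + lam) • D u) (hG (u + lam)) : ℂ)
      with hfdef
    have hf : AEStronglyMeasurable f (gaussian n) := by
      apply AEStronglyMeasurable.inner
      · exact (((kern_continuous lam).comp htrans).aestronglyMeasurable).smul hD
      · exact ((hGc.comp htrans)).aestronglyMeasurable
    have step1 : (inner ℂ (F₁ - qL) G0 : ℂ) = ∫ w, f (w - lam) ∂(gaussian n) := by
      rw [L2.inner_def]
      refine integral_congr_ae ?_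
      filter_upwards [hF₁, hqLe, Lp.coeFn_sub F₁ qL, hGe] with w h1 h2 h3 h4
      rw [h3, Pi.sub_apply, h1, h2, h4, hqdef]
      simp only [hfdef, hDdef, sub_add_cancel]
      rw [← smul_sub]
    have step2 : ∫ w, f (w - lam) ∂(gaussian n) = ∫ u, wt lam u • f u ∂(gaussian n) :=
      integral_gaussian_translate lam f hf
    have step3 : (fun u => wt lam u • f u) = fun u => (inner ℂ (D u) (Gt u) : ℂ) := by
      funext u
      simp only [hfdef, hGtdef]
      rw [inner_smul_left, inner_smul_right, Complex.real_smul, ← mul_assoc, key_scalar]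
    have step4 : ∫ u, (inner ℂ (D u) (Gt u) : ℂ) ∂(gaussian n) = 0 := by
      have horth := hP_orth F₂ GtL hGtSB
      rw [L2.inner_def] at horth
      rw [← horth]
      refine integral_congr_ae ?_
      filter_upwards [hF₂, hp₂, Lp.coeFn_sub F₂ (P F₂), hGtLe] with u h1 h2 h3 h4
      rw [h3, Pi.sub_apply, h1, h2, h4]
    rw [step1, step2, step3, step4]
  -- uniqueness of projection
  have horthall : ∀ G ∈ SegalBargmann n H, (inner ℂ (P F₁ - qL) G : ℂ) = 0 := by
    intro G hG
    have h1 := hP_orth F₁ G hG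
    have h2 := hkey G hG
    have h3 : P F₁ - qL = (F₁ - qL) - (F₁ - P F₁) := by abel
    rw [h3, inner_sub_left, h1, h2, sub_zero]
  have hPF₁qL : P F₁ - qL ∈ SegalBargmann n H :=
    SegalBargmann.sub (hP_range F₁) hqLSB
  have hPq : P F₁ = qL := by
    have := horthall (P F₁ - qL) hPF₁qL
    rwa [inner_self_eq_zero, sub_eq_zero] at this
  -- from a.e. equality to everywhere
  have hae : p₁ =ᵐ[gaussian n] q := by
    have h1 : ∀ᵐ z ∂(gaussian n), (P F₁) z = p₁ z := hp₁
    filter_upwards [h1, hqLe] with z hz1 hz2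
    rw [← hz1, hPq, hz2]
  have hvol : (volume : Measure (Cn n)) ≪ (gaussian n) := by
    rw [gaussian]
    apply withDensity_absolutelyContinuous'
    · exact (gdens_measurable n).aemeasurable
    · filter_upwards with z
      exact (ENNReal.ofReal_pos.mpr (gdens_pos z)).ne'
  have haev : p₁ =ᵐ[(volume : Measure (Cn n))] q := hvol.ae_eq hae
  have : p₁ = q := (Continuous.ae_eq_iff_eq volume hp₁c hqc).mp haev
  intro z
  rw [this]
end
end

section
/- Let H be a separable Hilbert space, let Φ : ℂⁿ → B(H) be Borel, let γ : ℂⁿ×ℂⁿ → ℂ be Borel, and suppose that z ↦ exp(|z|²)·∫|γ(z,w)|²‖Ξ_Φ(z,w)‖²_{HS} dμ_G(w) is μ_G-integrable. Then the kernel Θ(x,y) whose adjoint acts by Θ(x,y)*g = γ(x, y−x)·k_x(y)·Ξ_Φ(x, y−x)g satisfies ∫∫ ‖Θ(x,y)‖²_{HS} dμ_G(x)dμ_G(y) < ∞, i.e. Θ is a Hilbert–Schmidt kernel. -/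
open MeasureTheory Complex ENNReal Filter

noncomputable section

variable {H : Type} [NormedAddCommGroup H] [InnerProductSpace ℂ H] [CompleteSpace H]

/-- The squared Hilbert–Schmidt norm of an operator, computed in a Hilbert basis
(with value `∞` when the operator is not Hilbert–Schmidt). -/
def hsNormSq {ι : Type} (b : HilbertBasis ι ℂ H) (A : H →L[ℂ] H) : ℝ≥0∞ :=
  ∑' i, (‖A (b i)‖₊ : ℝ≥0∞) ^ 2

omit [CompleteSpace H] in
/-- Parseval in `ℝ≥0∞` form. -/
lemma keyHB {ι : Type} (b : HilbertBasis ι ℂ H) (v : H) :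
    (‖v‖₊ : ℝ≥0∞) ^ 2 = ∑' j, (‖(inner ℂ (b j) v : ℂ)‖₊ : ℝ≥0∞) ^ 2 := by
  have term : ∀ c : ℂ, ((starRingEnd ℂ) c * c).re = ‖c‖ ^ 2 := fun c => by
    rw [mul_comm, Complex.mul_conj]
    simp [Complex.normSq_eq_norm_sq]
    norm_cast
  have h1 : HasSum (fun j => ‖(inner ℂ (b j) v : ℂ)‖ ^ 2) (‖v‖ ^ 2) := by
    have := (b.hasSum_inner_mul_inner v v).mapL Complex.reCLM
    convert this using 2 with j
    · rw [← inner_conj_symm v (b j)]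
      exact (term _).symm
    · exact (@inner_self_eq_norm_sq ℂ _ _ _ _ v).symm
  have h2 : ENNReal.ofReal (‖v‖ ^ 2) = ∑' j, ENNReal.ofReal (‖(inner ℂ (b j) v : ℂ)‖ ^ 2) := by
    rw [← h1.tsum_eq]
    exact ENNReal.ofReal_tsum_of_nonneg (fun j => by positivity) h1.summable
  calc (‖v‖₊ : ℝ≥0∞) ^ 2 = ENNReal.ofReal (‖v‖ ^ 2) := by
        rw [ENNReal.ofReal_pow (norm_nonneg _), ofReal_norm, enorm_eq_nnnorm]
    _ = ∑' j, ENNReal.ofReal (‖(inner ℂ (b j) v : ℂ)‖ ^ 2) := h2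
    _ = ∑' j, (‖(inner ℂ (b j) v : ℂ)‖₊ : ℝ≥0∞) ^ 2 := by
        congr 1; funext j
        rw [ENNReal.ofReal_pow (norm_nonneg _), ofReal_norm, enorm_eq_nnnorm]

/-- The Hilbert–Schmidt norm of the adjoint agrees with that of the operator. -/
lemma hsNormSq_adjoint {ι : Type} (b : HilbertBasis ι ℂ H) (A : H →L[ℂ] H) :
    hsNormSq b (ContinuousLinearMap.adjoint A) = hsNormSq b A := by
  unfold hsNormSq
  calc ∑' i, (‖(ContinuousLinearMap.adjoint A) (b i)‖₊ : ℝ≥0∞) ^ 2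
      = ∑' i, ∑' j, (‖(inner ℂ (b j) ((ContinuousLinearMap.adjoint A) (b i)) : ℂ)‖₊ : ℝ≥0∞) ^ 2 := by
        simp_rw [← keyHB b]
    _ = ∑' j, ∑' i, (‖(inner ℂ (b j) ((ContinuousLinearMap.adjoint A) (b i)) : ℂ)‖₊ : ℝ≥0∞) ^ 2 :=
        ENNReal.tsum_comm
    _ = ∑' j, ∑' i, (‖(inner ℂ (b i) (A (b j)) : ℂ)‖₊ : ℝ≥0∞) ^ 2 := by
        congr 1; funext j; congr 1; funext i
        rw [ContinuousLinearMap.adjoint_inner_right, ← inner_conj_symm (A (b j)) (b i)]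
        rw [RCLike.nnnorm_conj]
    _ = ∑' j, (‖A (b j)‖₊ : ℝ≥0∞) ^ 2 := by simp_rw [← keyHB b]

/-- if `z ↦ exp(|z|²)·∫ |γ(z,w)|² ‖Ξ_Φ(z,w)‖²_{HS} dμ_G(w)` is
`μ_G`-integrable, then the kernel `Θ` with `Θ(x,y)* g = γ(x,y−x)·k_x(y)·Ξ_Φ(x,y−x)g`
is a Hilbert–Schmidt kernel: `∫∫ ‖Θ(x,y)‖²_{HS} dμ_G(x) dμ_G(y) < ∞`. -/
theorem weighted_kernel_hilbertSchmidt {n : ℕ} {ι : Type} (b : HilbertBasis ι ℂ H)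
    (Φ : Cn n → H →L[ℂ] H) (γ : Cn n → Cn n → ℂ)
    (hγ : Measurable fun p : Cn n × Cn n => γ p.1 p.2)
    (Xi : Cn n → Cn n → H →L[ℂ] H)
    (hInt : ∀ (z w : Cn n) (g : H),
      Integrable (fun u => (starRingEnd ℂ) (kern w u) • Φ (z + u) g) (gaussian n))
    (hXi : ∀ (z w : Cn n) (g : H),
      Xi z w g = ∫ u, (starRingEnd ℂ) (kern w u) • Φ (z + u) g ∂(gaussian n))
    (halpha : ∫⁻ z, ENNReal.ofReal (Real.exp (‖z‖ ^ 2)) *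
        ∫⁻ w, (‖γ z w‖₊ : ℝ≥0∞) ^ 2 * hsNormSq b (Xi z w) ∂(gaussian n)
        ∂(gaussian n) < ∞)
    (Θ : Cn n → Cn n → H →L[ℂ] H)
    (hΘ : ∀ (x y : Cn n) (g : H),
      ContinuousLinearMap.adjoint (Θ x y) g = γ x (y - x) • (kern x y • Xi x (y - x) g)) :
    ∫⁻ x, ∫⁻ y, hsNormSq b (Θ x y) ∂(gaussian n) ∂(gaussian n) < ∞ := by
  -- the Gaussian density
  set ρ : Cn n → ℝ≥0∞ :=
    fun z => ENNReal.ofReal ((Real.pi ^ n)⁻¹ * Real.exp (-‖z‖ ^ 2)) with hρ_def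
  have hρm : Measurable ρ := by
    apply Measurable.ennreal_ofReal
    exact measurable_const.mul (((measurable_norm.pow_const 2).neg).exp)
  have hρfin : ∀ᵐ y ∂(volume : Measure (Cn n)), ρ y < ∞ := by
    filter_upwards with y using ENNReal.ofReal_lt_top
  -- pointwise identity for the HS norm of Θ
  have hpt : ∀ x y : Cn n, hsNormSq b (Θ x y)
      = ((‖γ x (y - x)‖₊ : ℝ≥0∞) ^ 2 * hsNormSq b (Xi x (y - x)))
        * (‖kern x y‖₊ : ℝ≥0∞) ^ 2 := by
    intro x y
    rw [← hsNormSq_adjoint b (Θ x y)]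
    unfold hsNormSq
    have e1 : (fun i => (‖(ContinuousLinearMap.adjoint (Θ x y)) (b i)‖₊ : ℝ≥0∞) ^ 2)
        = fun i => ((‖γ x (y - x)‖₊ : ℝ≥0∞) ^ 2 * (‖kern x y‖₊ : ℝ≥0∞) ^ 2)
            * (‖Xi x (y - x) (b i)‖₊ : ℝ≥0∞) ^ 2 := by
      funext i
      rw [hΘ, nnnorm_smul, nnnorm_smul]
      push_cast
      ring
    rw [e1, ENNReal.tsum_mul_left]
    ring
  -- the kernel factor as an exponential
  have hkern : ∀ x y : Cn n, ((‖kern x y‖₊ : ℝ≥0∞) : ℝ≥0∞) ^ 2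
      = ENNReal.ofReal (Real.exp (2 * (inner ℂ x y : ℂ).re)) := by
    intro x y
    rw [← enorm_eq_nnnorm, ← ofReal_norm, ← ENNReal.ofReal_pow (norm_nonneg _)]
    congr 1
    rw [kern, Complex.norm_exp, sq, ← Real.exp_add]
    ring_nf
  -- exponent algebra
  have hexp : ∀ x y : Cn n,
      Real.exp (2 * (inner ℂ x y : ℂ).re) * ((Real.pi ^ n)⁻¹ * Real.exp (-‖y‖ ^ 2))
      = Real.exp (‖x‖ ^ 2) * ((Real.pi ^ n)⁻¹ * Real.exp (-‖y - x‖ ^ 2)) := by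
    intro x y
    have hn : ‖y - x‖ ^ 2 = ‖y‖ ^ 2 - 2 * (inner ℂ x y : ℂ).re + ‖x‖ ^ 2 := by
      have := @norm_sub_sq ℂ _ _ _ _ y x
      simp only [RCLike.re_to_complex] at this
      rw [this, ← inner_conj_symm x y]
      simp only [Complex.conj_re]
    have e1 : Real.exp (2 * (inner ℂ x y : ℂ).re) * Real.exp (-‖y‖ ^ 2)
        = Real.exp (‖x‖ ^ 2) * Real.exp (-‖y - x‖ ^ 2) := by
      rw [← Real.exp_add, ← Real.exp_add]
      congr 1
      rw [hn]; ring
    calc Real.exp (2 * (inner ℂ x y : ℂ).re) * ((Real.pi ^ n)⁻¹ * Real.exp (-‖y‖ ^ 2))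
        = (Real.pi ^ n)⁻¹ * (Real.exp (2 * (inner ℂ x y : ℂ).re) * Real.exp (-‖y‖ ^ 2)) := by ring
      _ = (Real.pi ^ n)⁻¹ * (Real.exp (‖x‖ ^ 2) * Real.exp (-‖y - x‖ ^ 2)) := by rw [e1]
      _ = Real.exp (‖x‖ ^ 2) * ((Real.pi ^ n)⁻¹ * Real.exp (-‖y - x‖ ^ 2)) := by ring
  -- the inner integral
  have hinner : ∀ x : Cn n, ∫⁻ y, hsNormSq b (Θ x y) ∂(gaussian n)
      = ENNReal.ofReal (Real.exp (‖x‖ ^ 2)) *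
          ∫⁻ w, (‖γ x w‖₊ : ℝ≥0∞) ^ 2 * hsNormSq b (Xi x w) ∂(gaussian n) := by
    intro x
    have key : ∀ y : Cn n, ρ y * hsNormSq b (Θ x y)
        = ENNReal.ofReal (Real.exp (‖x‖ ^ 2)) *
            (ρ (y - x) * ((‖γ x (y - x)‖₊ : ℝ≥0∞) ^ 2 * hsNormSq b (Xi x (y - x)))) := by
      intro y
      have comb : ρ y * ENNReal.ofReal (Real.exp (2 * (inner ℂ x y : ℂ).re))
          = ENNReal.ofReal (Real.exp (‖x‖ ^ 2)) * ρ (y - x) := by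
        rw [hρ_def]
        simp only
        rw [← ENNReal.ofReal_mul (by positivity), mul_comm ((Real.pi ^ n)⁻¹ * _),
          hexp x y, ENNReal.ofReal_mul (Real.exp_nonneg _)]
      calc ρ y * hsNormSq b (Θ x y)
          = (ρ y * ENNReal.ofReal (Real.exp (2 * (inner ℂ x y : ℂ).re))) *
              ((‖γ x (y - x)‖₊ : ℝ≥0∞) ^ 2 * hsNormSq b (Xi x (y - x))) := by
            rw [hpt x y, hkern x y]; ring
        _ = (ENNReal.ofReal (Real.exp (‖x‖ ^ 2)) * ρ (y - x)) *
              ((‖γ x (y - x)‖₊ : ℝ≥0∞) ^ 2 * hsNormSq b (Xi x (y - x))) := by rw [comb]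
        _ = ENNReal.ofReal (Real.exp (‖x‖ ^ 2)) *
              (ρ (y - x) * ((‖γ x (y - x)‖₊ : ℝ≥0∞) ^ 2 * hsNormSq b (Xi x (y - x)))) := by
            rw [mul_assoc]
    calc ∫⁻ y, hsNormSq b (Θ x y) ∂(gaussian n)
        = ∫⁻ y, ρ y * hsNormSq b (Θ x y) ∂(volume : Measure (Cn n)) := by
          rw [gaussian, lintegral_withDensity_eq_lintegral_mul_non_measurable _ hρm hρfin]
          rfl
      _ = ∫⁻ y, ENNReal.ofReal (Real.exp (‖x‖ ^ 2)) *
            (ρ (y - x) * ((‖γ x (y - x)‖₊ : ℝ≥0∞) ^ 2 * hsNormSq b (Xi x (y - x))))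
            ∂(volume : Measure (Cn n)) := lintegral_congr key
      _ = ENNReal.ofReal (Real.exp (‖x‖ ^ 2)) *
            ∫⁻ y, ρ (y - x) * ((‖γ x (y - x)‖₊ : ℝ≥0∞) ^ 2 * hsNormSq b (Xi x (y - x)))
            ∂(volume : Measure (Cn n)) :=
          lintegral_const_mul' _ _ ENNReal.ofReal_ne_top
      _ = ENNReal.ofReal (Real.exp (‖x‖ ^ 2)) *
            ∫⁻ w, ρ w * ((‖γ x w‖₊ : ℝ≥0∞) ^ 2 * hsNormSq b (Xi x w))
            ∂(volume : Measure (Cn n)) := by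
          congr 1
          simp_rw [sub_eq_add_neg]
          exact lintegral_add_right_eq_self
            (fun w => ρ w * ((‖γ x w‖₊ : ℝ≥0∞) ^ 2 * hsNormSq b (Xi x w))) (-x)
      _ = ENNReal.ofReal (Real.exp (‖x‖ ^ 2)) *
            ∫⁻ w, (‖γ x w‖₊ : ℝ≥0∞) ^ 2 * hsNormSq b (Xi x w) ∂(gaussian n) := by
          congr 1
          rw [gaussian, lintegral_withDensity_eq_lintegral_mul_non_measurable _ hρm hρfin]
          rfl
  calc ∫⁻ x, ∫⁻ y, hsNormSq b (Θ x y) ∂(gaussian n) ∂(gaussian n)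
      = ∫⁻ x, ENNReal.ofReal (Real.exp (‖x‖ ^ 2)) *
          ∫⁻ w, (‖γ x w‖₊ : ℝ≥0∞) ^ 2 * hsNormSq b (Xi x w) ∂(gaussian n) ∂(gaussian n) :=
        lintegral_congr hinner
    _ < ∞ := halpha
end
end

section
/- Suppose Φ : ℂⁿ → HS(H) is Borel with ‖Φ(u)‖_{HS} ≤ C μ_G-a.e., and Δ ⊆ ℂⁿ is a bounded Borel set. Then ∫_Δ exp(|z|²) (∫_{ℂⁿ} ‖Ξ_Φ(z,w)‖²_{HS} dμ_G(w)) dμ_G(z) < ∞; consequently the kernel Θ(z,w)* g = χ_Δ(z) k_z(w) Ξ_Φ(z, w−z)g is a Hilbert–Schmidt kernel with respect to μ_G ⊗ μ_G. -/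
open MeasureTheory Complex ENNReal Filter

noncomputable section

variable {H : Type} [NormedAddCommGroup H] [InnerProductSpace ℂ H] [CompleteSpace H]

namespace TKHSaux

variable {n : ℕ}

lemma dens_meas : Measurable fun z : Cn n =>
    ENNReal.ofReal ((Real.pi ^ n)⁻¹ * Real.exp (-‖z‖ ^ 2)) := by
  exact (ENNReal.continuous_ofReal.comp
    (continuous_const.mul (Real.continuous_exp.comp (continuous_norm.pow 2).neg))).measurable

lemma lintegral_gaussian (f : Cn n → ℝ≥0∞) :
    ∫⁻ z, f z ∂(gaussian n) =
      ∫⁻ z, ENNReal.ofReal ((Real.pi ^ n)⁻¹ * Real.exp (-‖z‖ ^ 2)) * f z ∂volume := by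
  rw [gaussian, lintegral_withDensity_eq_lintegral_mul_non_measurable _ dens_meas
    (Eventually.of_forall fun z => ofReal_lt_top)]
  rfl

lemma integrable_gauss {a : ℝ} (ha : 0 < a) :
    Integrable (fun z : Cn n => Real.exp (-a * ‖z‖ ^ 2)) volume := by
  have h := GaussianFourier.integrable_cexp_neg_mul_sq_norm_add (V := Cn n) (b := (a : ℂ))
    (by simpa using ha) 0 0
  simp only [zero_mul, add_zero, inner_zero_left, mul_zero] at h
  have he : ∀ z : Cn n, Real.exp (-a * ‖z‖ ^ 2) = ‖Complex.exp (-(a : ℂ) * (‖z‖ : ℂ) ^ 2)‖ := by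
    intro z
    rw [Complex.norm_exp]
    rw [← Complex.ofReal_pow, ← Complex.ofReal_neg, ← Complex.ofReal_mul, Complex.ofReal_re]
  rw [integrable_congr (Eventually.of_forall fun z => he z)]
  exact h.norm

lemma expGauss_lt_top {c : ℝ} (hc : c < 1) :
    ∫⁻ z : Cn n, ENNReal.ofReal (Real.exp (c * ‖z‖ ^ 2)) ∂(gaussian n) < ∞ := by
  rw [lintegral_gaussian]
  have key : ∀ z : Cn n, ENNReal.ofReal ((Real.pi ^ n)⁻¹ * Real.exp (-‖z‖ ^ 2)) *
      ENNReal.ofReal (Real.exp (c * ‖z‖ ^ 2)) =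
      ENNReal.ofReal ((Real.pi ^ n)⁻¹) * ENNReal.ofReal (Real.exp (-(1 - c) * ‖z‖ ^ 2)) := by
    intro z
    rw [← ENNReal.ofReal_mul (by positivity), ← ENNReal.ofReal_mul (by positivity),
      mul_assoc, ← Real.exp_add]
    congr 2
    ring_nf
  simp_rw [key]
  rw [lintegral_const_mul' _ _ ofReal_ne_top]
  exact ENNReal.mul_lt_top ofReal_lt_top (integrable_gauss (by linarith)).lintegral_lt_top

lemma enorm_sq_eq {ι : Type} (b : HilbertBasis ι ℂ H) (x : H) :
    (‖x‖₊ : ℝ≥0∞) ^ 2 = ∑' i, (‖(inner ℂ (b i) x : ℂ)‖₊ : ℝ≥0∞) ^ 2 := by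
  have h := b.hasSum_inner_mul_inner x x
  have hterm : ∀ i, (inner ℂ x (b i) : ℂ) * (inner ℂ (b i) x : ℂ) =
      ((‖(inner ℂ (b i) x : ℂ)‖ ^ 2 : ℝ) : ℂ) := by
    intro i
    rw [← inner_conj_symm x (b i), mul_comm, Complex.mul_conj, Complex.normSq_eq_norm_sq]
  have hlim : (inner ℂ x x : ℂ) = ((‖x‖ ^ 2 : ℝ) : ℂ) := by
    rw [inner_self_eq_norm_sq_to_K]; norm_cast
  rw [funext hterm, hlim] at h
  have h2 : HasSum (fun i => ‖(inner ℂ (b i) x : ℂ)‖ ^ 2) (‖x‖ ^ 2) :=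
    Complex.hasSum_ofReal.mp h
  have e1 : ∀ i, (‖(inner ℂ (b i) x : ℂ)‖₊ : ℝ≥0∞) ^ 2 =
      ENNReal.ofReal (‖(inner ℂ (b i) x : ℂ)‖ ^ 2) := by
    intro i
    rw [← enorm_eq_nnnorm, ← ofReal_norm, ← ENNReal.ofReal_pow (norm_nonneg _)]
  simp_rw [e1]
  rw [← ENNReal.ofReal_tsum_of_nonneg (fun i => by positivity) h2.summable, h2.tsum_eq,
    ← enorm_eq_nnnorm, ← ofReal_norm, ← ENNReal.ofReal_pow (norm_nonneg _)]

lemma hsNormSq_double {ι : Type} (b : HilbertBasis ι ℂ H) (A : H →L[ℂ] H) :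
    hsNormSq b A = ∑' i, ∑' j, (‖(inner ℂ (b j) (A (b i)) : ℂ)‖₊ : ℝ≥0∞) ^ 2 :=
  tsum_congr fun i => enorm_sq_eq b (A (b i))

lemma hsNormSq_adjoint {ι : Type} (b : HilbertBasis ι ℂ H) (A : H →L[ℂ] H) :
    hsNormSq b (ContinuousLinearMap.adjoint A) = hsNormSq b A := by
  rw [hsNormSq_double, hsNormSq_double]
  have e : ∀ i j, (‖(inner ℂ (b j) ((ContinuousLinearMap.adjoint A) (b i)) : ℂ)‖₊ : ℝ≥0∞) ^ 2 =
      (‖(inner ℂ (b i) (A (b j)) : ℂ)‖₊ : ℝ≥0∞) ^ 2 := by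
    intro i j
    rw [ContinuousLinearMap.adjoint_inner_right]
    congr 2
    exact NNReal.eq (by rw [coe_nnnorm, coe_nnnorm, norm_inner_symm])
  simp_rw [e]
  exact ENNReal.tsum_comm

end TKHSaux

/-- for `Φ` essentially bounded in Hilbert–Schmidt norm and `Δ ⊆ ℂⁿ` a bounded
Borel set, `∫_Δ exp(|z|²) (∫ ‖Ξ_Φ(z,w)‖²_{HS} dμ_G(w)) dμ_G(z) < ∞`, and hence the kernel
`Θ(z,w)* g = χ_Δ(z)·k_z(w)·Ξ_Φ(z,w−z)g` is a Hilbert–Schmidt kernel. -/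
theorem truncated_kernel_hilbertSchmidt {n : ℕ} {ι : Type} (b : HilbertBasis ι ℂ H)
    (Φ : Cn n → H →L[ℂ] H) (C : ℝ)
    (hC : ∀ᵐ u ∂(gaussian n), hsNormSq b (Φ u) ≤ ENNReal.ofReal (C ^ 2))
    (Δ : Set (Cn n)) (hΔb : Bornology.IsBounded Δ) (hΔm : MeasurableSet Δ)
    (Xi : Cn n → Cn n → H →L[ℂ] H)
    (hInt : ∀ (z w : Cn n) (g : H),
      Integrable (fun u => (starRingEnd ℂ) (kern w u) • Φ (z + u) g) (gaussian n))
    (hXi : ∀ (z w : Cn n) (g : H),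
      Xi z w g = ∫ u, (starRingEnd ℂ) (kern w u) • Φ (z + u) g ∂(gaussian n))
    (Θ : Cn n → Cn n → H →L[ℂ] H)
    (hΘ : ∀ (z w : Cn n) (g : H),
      ContinuousLinearMap.adjoint (Θ z w) g =
        Δ.indicator (fun _ => (1 : ℂ)) z • (kern z w • Xi z (w - z) g)) :
    (∫⁻ z in Δ, ENNReal.ofReal (Real.exp (‖z‖ ^ 2)) *
        ∫⁻ w, hsNormSq b (Xi z w) ∂(gaussian n) ∂(gaussian n)) < ∞ ∧
    ∫⁻ z, ∫⁻ w, hsNormSq b (Θ z w) ∂(gaussian n) ∂(gaussian n) < ∞ := by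
  classical
  set μ := gaussian n with hμdef
  -- finite Gaussian-type integrals
  set E34 : ℝ≥0∞ := ∫⁻ u : Cn n, ENNReal.ofReal (Real.exp (3/4 * ‖u‖ ^ 2)) ∂μ with hE34def
  set E12 : ℝ≥0∞ := ∫⁻ u : Cn n, ENNReal.ofReal (Real.exp (1/2 * ‖u‖ ^ 2)) ∂μ with hE12def
  set E45 : ℝ≥0∞ := ∫⁻ u : Cn n, ENNReal.ofReal (Real.exp (4/5 * ‖u‖ ^ 2)) ∂μ with hE45def
  have hE34 : E34 < ∞ := TKHSaux.expGauss_lt_top (by norm_num)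
  have hE12 : E12 < ∞ := TKHSaux.expGauss_lt_top (by norm_num)
  have hE45 : E45 < ∞ := TKHSaux.expGauss_lt_top (by norm_num)
  have hμuniv : μ Set.univ < ∞ := by
    have h0 : (∫⁻ u : Cn n, ENNReal.ofReal (Real.exp ((0:ℝ) * ‖u‖ ^ 2)) ∂μ) < ∞ :=
      TKHSaux.expGauss_lt_top (by norm_num)
    simpa using h0
  -- a.e. bound at shifted points
  have hCshift : ∀ z : Cn n, ∀ᵐ u ∂μ, hsNormSq b (Φ (z + u)) ≤ ENNReal.ofReal (C ^ 2) := by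
    intro z
    have h1 : ∀ᵐ u ∂(volume : Measure (Cn n)), hsNormSq b (Φ u) ≤ ENNReal.ofReal (C ^ 2) := by
      have h0 := (ae_withDensity_iff (μ := (volume : Measure (Cn n)))
        (p := fun u => hsNormSq b (Φ u) ≤ ENNReal.ofReal (C ^ 2)) TKHSaux.dens_meas).mp hC
      filter_upwards [h0] with u hu
      exact hu (ne_of_gt (ENNReal.ofReal_pos.mpr (by positivity)))
    have h2 : ∀ᵐ u ∂(volume : Measure (Cn n)),
        hsNormSq b (Φ (z + u)) ≤ ENNReal.ofReal (C ^ 2) :=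
      ((measurePreserving_add_left (volume : Measure (Cn n))
        z).quasiMeasurePreserving.tendsto_ae).eventually h1
    exact h2.filter_mono (withDensity_absolutelyContinuous _ _).ae_le
  -- integrability of the plain integrand
  have hΦg : ∀ (z : Cn n) (g : H), Integrable (fun u => Φ (z + u) g) μ := by
    intro z g
    have h := hInt z 0 g
    simpa [kern, inner_zero_left, Complex.exp_zero] using h
  -- kern norm
  have hkern_e : ∀ w u : Cn n, (‖kern w u‖₊ : ℝ≥0∞) =
      ENNReal.ofReal (Real.exp ((inner ℂ w u : ℂ).re)) := by
    intro w u
    rw [← enorm_eq_nnnorm, ← ofReal_norm, kern, Complex.norm_exp]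
  have hsq : ∀ A : ℝ≥0∞, (A ^ ((2:ℝ)⁻¹ : ℝ)) ^ (2 : ℕ) = A := by
    intro A
    rw [← ENNReal.rpow_natCast (A ^ ((2:ℝ)⁻¹ : ℝ)) 2, ← ENNReal.rpow_mul]
    norm_num
  -- the key Cauchy-Schwarz bound
  have key : ∀ (z w : Cn n) (i : ι),
      (‖Xi z w (b i)‖₊ : ℝ≥0∞) ^ 2 ≤
        (ENNReal.ofReal (Real.exp (4/5 * ‖w‖ ^ 2)) * E34) *
        ∫⁻ u, ENNReal.ofReal (Real.exp (1/2 * ‖u‖ ^ 2)) *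
          (‖Φ (z + u) (b i)‖₊ : ℝ≥0∞) ^ 2 ∂μ := by
    intro z w i
    set f1 : Cn n → ℝ≥0∞ :=
      fun u => ENNReal.ofReal (Real.exp ((inner ℂ w u : ℂ).re - 1/4 * ‖u‖ ^ 2)) with hf1def
    set f2 : Cn n → ℝ≥0∞ :=
      fun u => ENNReal.ofReal (Real.exp (1/4 * ‖u‖ ^ 2)) * (‖Φ (z + u) (b i)‖₊ : ℝ≥0∞) with hf2def
    have s1 : (‖Xi z w (b i)‖₊ : ℝ≥0∞) ≤ ∫⁻ u, f1 u * f2 u ∂μ := by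
      rw [hXi z w (b i)]
      refine le_trans (enorm_integral_le_lintegral_enorm _) (le_of_eq ?_)
      refine lintegral_congr fun u => ?_
      rw [enorm_eq_nnnorm, nnnorm_smul]
      push_cast
      rw [show ‖(starRingEnd ℂ) (kern w u)‖₊ = ‖kern w u‖₊ by simp]
      rw [hkern_e w u, hf1def, hf2def]
      rw [← mul_assoc, ← ENNReal.ofReal_mul (Real.exp_nonneg _), ← Real.exp_add]
      ring_nf
    have hm1 : AEMeasurable f1 μ := by
      refine Continuous.aemeasurable ?_
      exact ENNReal.continuous_ofReal.comp (Real.continuous_exp.comp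
        ((Complex.continuous_re.comp (innerSL ℂ w).continuous).sub
          (continuous_const.mul (continuous_norm.pow 2))))
    have hm2 : AEMeasurable f2 μ := by
      refine AEMeasurable.mul ?_ ((hΦg z (b i)).aestronglyMeasurable.enorm)
      refine Continuous.aemeasurable ?_
      exact ENNReal.continuous_ofReal.comp (Real.continuous_exp.comp
        (continuous_const.mul (continuous_norm.pow 2)))
    have hpq : Real.HolderConjugate 2 2 := Real.HolderConjugate.two_two
    have hold := ENNReal.lintegral_mul_le_Lp_mul_Lq μ hpq hm1 hm2
    have s2 : (‖Xi z w (b i)‖₊ : ℝ≥0∞) ^ 2 ≤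
        (∫⁻ u, f1 u ^ (2:ℝ) ∂μ) * (∫⁻ u, f2 u ^ (2:ℝ) ∂μ) := by
      calc (‖Xi z w (b i)‖₊ : ℝ≥0∞) ^ 2 ≤ (∫⁻ u, f1 u * f2 u ∂μ) ^ 2 := by
            exact pow_le_pow_left' s1 2
        _ ≤ ((∫⁻ u, f1 u ^ (2:ℝ) ∂μ) ^ ((2:ℝ)⁻¹ : ℝ) *
              (∫⁻ u, f2 u ^ (2:ℝ) ∂μ) ^ ((2:ℝ)⁻¹ : ℝ)) ^ 2 := by
            apply pow_le_pow_left'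
            simpa [one_div] using hold
        _ = _ := by rw [mul_pow, hsq, hsq]
    have f1sq : ∀ u, f1 u ^ (2:ℝ) =
        ENNReal.ofReal (Real.exp (2 * (inner ℂ w u : ℂ).re - 1/2 * ‖u‖ ^ 2)) := by
      intro u
      rw [show ((2:ℝ)) = ((2:ℕ):ℝ) by norm_num, ENNReal.rpow_natCast, hf1def]
      rw [pow_two, ← ENNReal.ofReal_mul (Real.exp_nonneg _), ← Real.exp_add]
      congr 1
      ring
    have f2sq : ∀ u, f2 u ^ (2:ℝ) =
        ENNReal.ofReal (Real.exp (1/2 * ‖u‖ ^ 2)) * (‖Φ (z + u) (b i)‖₊ : ℝ≥0∞) ^ 2 := by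
      intro u
      rw [show ((2:ℝ)) = ((2:ℕ):ℝ) by norm_num, ENNReal.rpow_natCast, hf2def]
      rw [mul_pow]
      congr 1
      rw [pow_two, ← ENNReal.ofReal_mul (Real.exp_nonneg _), ← Real.exp_add]
      congr 1
      ring
    have hF1 : ∫⁻ u, f1 u ^ (2:ℝ) ∂μ ≤
        ENNReal.ofReal (Real.exp (4/5 * ‖w‖ ^ 2)) * E34 := by
      rw [hE34def, ← lintegral_const_mul' _ _ ofReal_ne_top]
      refine lintegral_mono fun u => ?_
      rw [f1sq u, ← ENNReal.ofReal_mul (Real.exp_nonneg _), ← Real.exp_add]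
      refine ENNReal.ofReal_le_ofReal (Real.exp_le_exp.mpr ?_)
      have h1 : (inner ℂ w u : ℂ).re ≤ ‖w‖ * ‖u‖ := by
        refine le_trans (Complex.re_le_norm _) ?_
        exact norm_inner_le_norm w u
      nlinarith [norm_nonneg w, norm_nonneg u, sq_nonneg (4 * ‖w‖ - 5 * ‖u‖)]
    calc (‖Xi z w (b i)‖₊ : ℝ≥0∞) ^ 2
        ≤ (∫⁻ u, f1 u ^ (2:ℝ) ∂μ) * (∫⁻ u, f2 u ^ (2:ℝ) ∂μ) := s2
      _ ≤ (ENNReal.ofReal (Real.exp (4/5 * ‖w‖ ^ 2)) * E34) *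
            (∫⁻ u, f2 u ^ (2:ℝ) ∂μ) := mul_le_mul_left hF1 _
      _ = _ := by rw [lintegral_congr f2sq]
  -- sum over the basis
  have hsum : ∀ z w : Cn n, hsNormSq b (Xi z w) ≤
      ENNReal.ofReal (Real.exp (4/5 * ‖w‖ ^ 2)) *
        (E34 * (ENNReal.ofReal (C ^ 2) * E12)) := by
    intro z w
    have h1 : hsNormSq b (Xi z w) ≤
        (ENNReal.ofReal (Real.exp (4/5 * ‖w‖ ^ 2)) * E34) *
          ∑' i, ∫⁻ u, ENNReal.ofReal (Real.exp (1/2 * ‖u‖ ^ 2)) *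
            (‖Φ (z + u) (b i)‖₊ : ℝ≥0∞) ^ 2 ∂μ := by
      rw [hsNormSq, ← ENNReal.tsum_mul_left]
      exact ENNReal.tsum_le_tsum fun i => key z w i
    have h2 : ∑' i, ∫⁻ u, ENNReal.ofReal (Real.exp (1/2 * ‖u‖ ^ 2)) *
          (‖Φ (z + u) (b i)‖₊ : ℝ≥0∞) ^ 2 ∂μ ≤
        ∫⁻ u, ENNReal.ofReal (Real.exp (1/2 * ‖u‖ ^ 2)) * hsNormSq b (Φ (z + u)) ∂μ := by
      have hmi : ∀ i : ι, AEMeasurable (fun u => ENNReal.ofReal (Real.exp (1/2 * ‖u‖ ^ 2)) *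
          (‖Φ (z + u) (b i)‖₊ : ℝ≥0∞) ^ 2) μ := by
        intro i
        refine AEMeasurable.mul ?_ (((hΦg z (b i)).aestronglyMeasurable.enorm).pow_const 2)
        refine Continuous.aemeasurable ?_
        exact ENNReal.continuous_ofReal.comp (Real.continuous_exp.comp
          (continuous_const.mul (continuous_norm.pow 2)))
      rw [ENNReal.tsum_eq_iSup_sum]
      refine iSup_le fun s => ?_
      rw [← lintegral_finset_sum' s (fun i _ => hmi i)]
      refine lintegral_mono fun u => ?_
      refine le_trans (Summable.sum_le_tsum s (fun i _ => zero_le) ENNReal.summable) (le_of_eq ?_)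
      rw [hsNormSq, ENNReal.tsum_mul_left]
    have h3 : ∫⁻ u, ENNReal.ofReal (Real.exp (1/2 * ‖u‖ ^ 2)) * hsNormSq b (Φ (z + u)) ∂μ ≤
        ENNReal.ofReal (C ^ 2) * E12 := by
      have hb : ∫⁻ u, ENNReal.ofReal (Real.exp (1/2 * ‖u‖ ^ 2)) * hsNormSq b (Φ (z + u)) ∂μ ≤
          ∫⁻ u, ENNReal.ofReal (Real.exp (1/2 * ‖u‖ ^ 2)) * ENNReal.ofReal (C ^ 2) ∂μ := by
        refine lintegral_mono_ae ?_
        filter_upwards [hCshift z] with u hu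
        exact mul_le_mul_right hu _
      refine le_trans hb (le_of_eq ?_)
      rw [lintegral_mul_const' _ _ ofReal_ne_top, hE12def, mul_comm]
    calc hsNormSq b (Xi z w) ≤ _ := h1
      _ ≤ (ENNReal.ofReal (Real.exp (4/5 * ‖w‖ ^ 2)) * E34) *
            (ENNReal.ofReal (C ^ 2) * E12) := mul_le_mul_right (le_trans h2 h3) _
      _ = _ := by ring
  -- the inner ℂ integral bound
  set Kc : ℝ≥0∞ := E34 * (ENNReal.ofReal (C ^ 2) * E12) with hKcdef
  have hKc : Kc ≠ ∞ :=
    (ENNReal.mul_lt_top hE34 (ENNReal.mul_lt_top ofReal_lt_top hE12)).ne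
  have hK : ∀ z : Cn n, ∫⁻ w, hsNormSq b (Xi z w) ∂μ ≤ E45 * Kc := by
    intro z
    refine le_trans (lintegral_mono fun w => hsum z w) ?_
    rw [lintegral_mul_const' _ _ hKc, hE45def]
  have hKfin : E45 * Kc < ∞ := ENNReal.mul_lt_top hE45 (lt_top_iff_ne_top.mpr hKc)
  -- FIRST CONJUNCT
  obtain ⟨R, hR⟩ := hΔb.exists_norm_le
  have first : (∫⁻ z in Δ, ENNReal.ofReal (Real.exp (‖z‖ ^ 2)) *
      ∫⁻ w, hsNormSq b (Xi z w) ∂μ ∂μ) < ∞ := by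
    calc ∫⁻ z in Δ, ENNReal.ofReal (Real.exp (‖z‖ ^ 2)) * ∫⁻ w, hsNormSq b (Xi z w) ∂μ ∂μ
        ≤ ∫⁻ z in Δ, ENNReal.ofReal (Real.exp (‖z‖ ^ 2)) * (E45 * Kc) ∂μ :=
          lintegral_mono fun z => mul_le_mul_right (hK z) _
      _ ≤ ∫⁻ _ in Δ, ENNReal.ofReal (Real.exp (R ^ 2)) * (E45 * Kc) ∂μ := by
          refine setLIntegral_mono' hΔm fun z hz => ?_
          refine mul_le_mul_left (ENNReal.ofReal_le_ofReal (Real.exp_le_exp.mpr ?_)) _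
          have := hR z hz
          nlinarith [norm_nonneg z]
      _ = ENNReal.ofReal (Real.exp (R ^ 2)) * (E45 * Kc) * μ Δ := setLIntegral_const _ _
      _ < ∞ := by
          refine ENNReal.mul_lt_top (ENNReal.mul_lt_top ofReal_lt_top hKfin) ?_
          exact lt_of_le_of_lt (measure_mono (Set.subset_univ Δ)) hμuniv
  -- SECOND CONJUNCT
  have hΘval : ∀ z w : Cn n, hsNormSq b (Θ z w) =
      Δ.indicator (fun _ => (1 : ℝ≥0∞)) z *
        (ENNReal.ofReal (Real.exp (2 * (inner ℂ z w : ℂ).re)) * hsNormSq b (Xi z (w - z))) := by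
    intro z w
    rw [← TKHSaux.hsNormSq_adjoint b (Θ z w)]
    by_cases hz : z ∈ Δ
    · rw [Set.indicator_of_mem hz, one_mul, hsNormSq, hsNormSq, ← ENNReal.tsum_mul_left]
      refine tsum_congr fun i => ?_
      rw [hΘ z w (b i), Set.indicator_of_mem hz, one_smul, nnnorm_smul]
      push_cast
      rw [mul_pow, hkern_e z w, pow_two, ← ENNReal.ofReal_mul (Real.exp_nonneg _),
        ← Real.exp_add, two_mul]
    · rw [Set.indicator_of_notMem hz, zero_mul, hsNormSq]
      have h0 : ∀ i, (ContinuousLinearMap.adjoint (Θ z w)) (b i) = 0 := by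
        intro i
        rw [hΘ z w (b i), Set.indicator_of_notMem hz, zero_smul]
      simp [h0]
  have hInner2 : ∀ z ∈ Δ, ∫⁻ w, hsNormSq b (Θ z w) ∂μ =
      ENNReal.ofReal (Real.exp (‖z‖ ^ 2)) * ∫⁻ w, hsNormSq b (Xi z w) ∂μ := by
    intro z hz
    have e1 : ∀ w, hsNormSq b (Θ z w) =
        ENNReal.ofReal (Real.exp (2 * (inner ℂ z w : ℂ).re)) * hsNormSq b (Xi z (w - z)) := by
      intro w
      rw [hΘval z w, Set.indicator_of_mem hz, one_mul]
    have keyreal : ∀ w : Cn n,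
        (Real.pi ^ n)⁻¹ * Real.exp (-‖w‖ ^ 2) * Real.exp (2 * (inner ℂ z w : ℂ).re) =
        (Real.pi ^ n)⁻¹ * Real.exp (‖z‖ ^ 2) * Real.exp (-‖w - z‖ ^ 2) := by
      intro w
      have hns : ‖w - z‖ ^ 2 = ‖w‖ ^ 2 - 2 * (inner ℂ w z : ℂ).re + ‖z‖ ^ 2 := by
        have := @norm_sub_sq ℂ (Cn n) _ _ _ w z
        simpa using this
      have hre : (inner ℂ w z : ℂ).re = (inner ℂ z w : ℂ).re := by
        rw [← inner_conj_symm z w, Complex.conj_re]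
      rw [mul_assoc, mul_assoc, ← Real.exp_add, ← Real.exp_add]
      congr 2
      rw [hns, hre]
      ring
    calc ∫⁻ w, hsNormSq b (Θ z w) ∂μ
        = ∫⁻ w, ENNReal.ofReal ((Real.pi ^ n)⁻¹ * Real.exp (-‖w‖ ^ 2)) *
            (ENNReal.ofReal (Real.exp (2 * (inner ℂ z w : ℂ).re)) *
              hsNormSq b (Xi z (w - z))) ∂volume := by
          rw [hμdef, TKHSaux.lintegral_gaussian]
          exact lintegral_congr fun w => by rw [e1]
      _ = ∫⁻ w, ENNReal.ofReal ((Real.pi ^ n)⁻¹ * Real.exp (‖z‖ ^ 2)) *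
            (ENNReal.ofReal (Real.exp (-‖w - z‖ ^ 2)) * hsNormSq b (Xi z (w - z))) ∂volume := by
          refine lintegral_congr fun w => ?_
          rw [← mul_assoc, ← mul_assoc, ← ENNReal.ofReal_mul (by positivity),
            ← ENNReal.ofReal_mul (by positivity), keyreal w]
      _ = ENNReal.ofReal ((Real.pi ^ n)⁻¹ * Real.exp (‖z‖ ^ 2)) *
            ∫⁻ w, ENNReal.ofReal (Real.exp (-‖w - z‖ ^ 2)) * hsNormSq b (Xi z (w - z)) ∂volume :=
          lintegral_const_mul' _ _ ofReal_ne_top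
      _ = ENNReal.ofReal ((Real.pi ^ n)⁻¹ * Real.exp (‖z‖ ^ 2)) *
            ∫⁻ w, ENNReal.ofReal (Real.exp (-‖w‖ ^ 2)) * hsNormSq b (Xi z w) ∂volume := by
          rw [lintegral_sub_right_eq_self
            (fun w => ENNReal.ofReal (Real.exp (-‖w‖ ^ 2)) * hsNormSq b (Xi z w)) z]
      _ = ENNReal.ofReal (Real.exp (‖z‖ ^ 2)) * ∫⁻ w, hsNormSq b (Xi z w) ∂μ := by
          rw [hμdef, TKHSaux.lintegral_gaussian]
          rw [show (Real.pi ^ n)⁻¹ * Real.exp (‖z‖ ^ 2) = Real.exp (‖z‖ ^ 2) * (Real.pi ^ n)⁻¹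
            by ring]
          rw [ENNReal.ofReal_mul (Real.exp_nonneg _), mul_assoc]
          congr 1
          rw [← lintegral_const_mul' _ _ ofReal_ne_top]
          refine lintegral_congr fun w => ?_
          rw [← mul_assoc, ← ENNReal.ofReal_mul (by positivity)]
  have second : ∫⁻ z, ∫⁻ w, hsNormSq b (Θ z w) ∂μ ∂μ =
      ∫⁻ z in Δ, ENNReal.ofReal (Real.exp (‖z‖ ^ 2)) * ∫⁻ w, hsNormSq b (Xi z w) ∂μ ∂μ := by
    have e : ∀ z, (∫⁻ w, hsNormSq b (Θ z w) ∂μ) =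
        Δ.indicator (fun z => ENNReal.ofReal (Real.exp (‖z‖ ^ 2)) *
          ∫⁻ w, hsNormSq b (Xi z w) ∂μ) z := by
      intro z
      by_cases hz : z ∈ Δ
      · rw [Set.indicator_of_mem hz]
        exact hInner2 z hz
      · rw [Set.indicator_of_notMem hz]
        have h0 : ∀ w, hsNormSq b (Θ z w) = 0 := by
          intro w
          rw [hΘval z w, Set.indicator_of_notMem hz, zero_mul]
        simp [h0]
    rw [lintegral_congr e, lintegral_indicator hΔm]
  exact ⟨first, by rw [second]; exact first⟩
end
end

section
/- Let C > 0 and let G : ℂⁿ × ℂⁿ → [0,∞) be Borel with G(z,w) ≤ C exp(|w|²/4) for all z,w. Then for every w ∈ ℂⁿ and every r ≥ 0, ∫_{ℂⁿ} χ_{{|z|≥r}}(z) |k_z(w)| G(z, w−z) exp(|z|²/2) dμ_G(z) ≤ C·2ⁿ(2π)ⁿ π^{-n} exp(|w|²/2). (First Schur-test estimate.) -/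
open MeasureTheory Complex ENNReal Filter

noncomputable section

lemma real_inner_eq_re {n : ℕ} (z w : Cn n) : (inner ℝ z w : ℝ) = (inner ℂ z w : ℂ).re := by
  simp [PiLp.inner_apply, Complex.inner, map_sum]

lemma gauss_int (n : ℕ) :
    ∫ v : Cn n, Real.exp (-(4⁻¹ : ℝ) * ‖v‖ ^ 2) = (4 * Real.pi) ^ n := by
  rw [GaussianFourier.integral_rexp_neg_mul_sq_norm (by norm_num : (0:ℝ) < 4⁻¹)]
  have hrank : Module.finrank ℝ (Cn n) = 2 * n := by
    rw [← Module.finrank_mul_finrank ℝ ℂ (Cn n), Complex.finrank_real_complex,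
      finrank_euclideanSpace, Fintype.card_fin]
  rw [hrank, show Real.pi / 4⁻¹ = 4 * Real.pi by field_simp,
    show ((2 * n : ℕ) : ℝ) / 2 = (n : ℝ) by push_cast; ring, Real.rpow_natCast]

lemma integrable_gauss (n : ℕ) :
    Integrable (fun v : Cn n => Real.exp (-(4⁻¹ : ℝ) * ‖v‖ ^ 2)) := by
  have h := (GaussianFourier.integrable_cexp_neg_mul_sq_norm_add (V := Cn n)
    (b := (4⁻¹ : ℂ)) (by norm_num) 0 (0 : Cn n)).norm
  convert h using 2 with v
  rw [Complex.norm_exp]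
  rw [show (-4⁻¹ * (‖v‖:ℂ) ^ 2 + 0 * ((inner ℝ (0 : Cn n) v : ℝ):ℂ)) = ((-4⁻¹ * ‖v‖ ^ 2 : ℝ) : ℂ) by push_cast; ring, Complex.ofReal_re]


/-- first Schur-test estimate: if `0 ≤ G(z,w) ≤ C·exp(|w|²/4)`, then for all
`w` and `r ≥ 0`,
`∫ χ_{|z|≥r} |k_z(w)| G(z,w−z) exp(|z|²/2) dμ_G(z) ≤ C·2ⁿ(2π)ⁿ π^{-n} exp(|w|²/2)`. -/
theorem schur_test_first_estimate {n : ℕ} (C : ℝ) (hC : 0 < C)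
    (G : Cn n → Cn n → ℝ)
    (hGm : Measurable fun p : Cn n × Cn n => G p.1 p.2)
    (hG0 : ∀ z w, 0 ≤ G z w)
    (hGb : ∀ z w, G z w ≤ C * Real.exp (‖w‖ ^ 2 / 4))
    (w : Cn n) (r : ℝ) (hr : 0 ≤ r) :
    ∫⁻ z, {z : Cn n | r ≤ ‖z‖}.indicator
        (fun z => ENNReal.ofReal (‖kern z w‖ * G z (w - z) * Real.exp (‖z‖ ^ 2 / 2))) z
      ∂(gaussian n) ≤
      ENNReal.ofReal
        (C * 2 ^ n * (2 * Real.pi) ^ n * (Real.pi ^ n)⁻¹ * Real.exp (‖w‖ ^ 2 / 2)) := by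
  have hπ : (0:ℝ) < Real.pi := Real.pi_pos
  set K : ℝ := C * (Real.pi ^ n)⁻¹ * Real.exp (‖w‖ ^ 2 / 2) with hK
  have hdens : Measurable fun z : Cn n =>
      ENNReal.ofReal ((Real.pi ^ n)⁻¹ * Real.exp (-‖z‖ ^ 2)) := by
    apply Measurable.ennreal_ofReal
    exact Continuous.measurable (by continuity)
  rw [gaussian, lintegral_withDensity_eq_lintegral_mul_non_measurable _ hdens
    (ae_of_all _ fun z => ENNReal.ofReal_lt_top)]
  have hbound : ∀ z : Cn n,
      ((fun z : Cn n => ENNReal.ofReal ((Real.pi ^ n)⁻¹ * Real.exp (-‖z‖ ^ 2))) *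
        fun z => {z : Cn n | r ≤ ‖z‖}.indicator
          (fun z => ENNReal.ofReal (‖kern z w‖ * G z (w - z) * Real.exp (‖z‖ ^ 2 / 2))) z) z
      ≤ ENNReal.ofReal (K * Real.exp (-(4⁻¹:ℝ) * ‖z - w‖ ^ 2)) := by
    intro z
    simp only [Pi.mul_apply]
    by_cases hz : z ∈ {z : Cn n | r ≤ ‖z‖}
    · rw [Set.indicator_of_mem hz, ← ENNReal.ofReal_mul (by positivity)]
      apply ENNReal.ofReal_le_ofReal
      have hker : ‖kern z w‖ = Real.exp ((inner ℂ z w : ℂ).re) := by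
        rw [kern, Complex.norm_exp]
      have hid : ‖z - w‖ ^ 2 = ‖z‖ ^ 2 - 2 * (inner ℂ z w : ℂ).re + ‖w‖ ^ 2 := by
        have h := @norm_sub_sq ℝ (Cn n) _ _ _ z w
        rwa [real_inner_eq_re] at h
      have hG : G z (w - z) ≤ C * Real.exp (‖z - w‖ ^ 2 / 4) := by
        rw [← norm_sub_rev w z]; exact hGb z (w - z)
      calc (Real.pi ^ n)⁻¹ * Real.exp (-‖z‖ ^ 2) *
            (‖kern z w‖ * G z (w - z) * Real.exp (‖z‖ ^ 2 / 2))
          ≤ (Real.pi ^ n)⁻¹ * Real.exp (-‖z‖ ^ 2) *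
            (Real.exp ((inner ℂ z w : ℂ).re) * (C * Real.exp (‖z - w‖ ^ 2 / 4)) *
              Real.exp (‖z‖ ^ 2 / 2)) := by
            rw [hker]
            apply mul_le_mul_of_nonneg_left _ (by positivity)
            apply mul_le_mul_of_nonneg_right _ (by positivity)
            exact mul_le_mul_of_nonneg_left hG (by positivity)
        _ = (Real.pi ^ n)⁻¹ * C *
            Real.exp (-‖z‖ ^ 2 + ((inner ℂ z w : ℂ).re + (‖z - w‖ ^ 2 / 4 + ‖z‖ ^ 2 / 2))) := by
            rw [Real.exp_add, Real.exp_add, Real.exp_add]; ring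
        _ = K * Real.exp (-(4⁻¹:ℝ) * ‖z - w‖ ^ 2) := by
            rw [show -‖z‖ ^ 2 + ((inner ℂ z w : ℂ).re + (‖z - w‖ ^ 2 / 4 + ‖z‖ ^ 2 / 2))
                = ‖w‖ ^ 2 / 2 + -(4⁻¹:ℝ) * ‖z - w‖ ^ 2 by rw [hid]; ring,
              Real.exp_add, hK]
            ring
    · rw [Set.indicator_of_notMem hz, mul_zero]
      exact zero_le
  calc ∫⁻ z, ((fun z : Cn n => ENNReal.ofReal ((Real.pi ^ n)⁻¹ * Real.exp (-‖z‖ ^ 2))) *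
        fun z => {z : Cn n | r ≤ ‖z‖}.indicator
          (fun z => ENNReal.ofReal (‖kern z w‖ * G z (w - z) * Real.exp (‖z‖ ^ 2 / 2))) z) z
      ≤ ∫⁻ z, ENNReal.ofReal (K * Real.exp (-(4⁻¹:ℝ) * ‖z - w‖ ^ 2)) := lintegral_mono hbound
    _ = ∫⁻ z : Cn n, ENNReal.ofReal (K * Real.exp (-(4⁻¹:ℝ) * ‖z‖ ^ 2)) :=
        lintegral_sub_right_eq_self
          (fun z : Cn n => ENNReal.ofReal (K * Real.exp (-(4⁻¹:ℝ) * ‖z‖ ^ 2))) w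
    _ = ENNReal.ofReal (∫ z : Cn n, K * Real.exp (-(4⁻¹:ℝ) * ‖z‖ ^ 2)) :=
        (ofReal_integral_eq_lintegral_ofReal ((integrable_gauss n).const_mul K)
          (ae_of_all _ fun z => by positivity)).symm
    _ = ENNReal.ofReal (K * (4 * Real.pi) ^ n) := by rw [integral_const_mul, gauss_int]
    _ = ENNReal.ofReal
        (C * 2 ^ n * (2 * Real.pi) ^ n * (Real.pi ^ n)⁻¹ * Real.exp (‖w‖ ^ 2 / 2)) := by
        rw [hK, show (4:ℝ) * Real.pi = 2 * (2 * Real.pi) by ring, mul_pow]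
        ring_nf
end
end
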